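/- The interior of ℍ_N in ℂ⁴ equals {(a, x₁, x₂, x₃) ∈ ℂ⁴ : a ≠ 0 and (x₁, x₂, x₃, a + (x₁x₂ − x₃)/a) ∈ 𝔽}, and ℍ_N equals the union of its interior with the set {(0, x₁, x₂, x₁x₂) ∈ ℂ⁴ : (x₁, x₂, x₁x₂, 0) ∈ 𝔽}. -/

import Mathlib

/-- The operator norm of a 2×2 complex matrix, acting on the Euclidean space ℂ². -/
noncomputable def opNorm (A : Matrix (Fin 2) (Fin 2) ℂ) : ℝ :=
  ‖LinearMap.toContinuousLinearMap (Matrix.toEuclideanLin A)‖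

/-- The domain 𝔽 = {(a₁₁, a₂₂, det A, a₁₂ + a₂₁) : A ∈ M₂(ℂ), ‖A‖ < 1}. -/
noncomputable def domF : Set (ℂ × ℂ × ℂ × ℂ) :=
  {w | ∃ A : Matrix (Fin 2) (Fin 2) ℂ, opNorm A < 1 ∧
    w = (A 0 0, A 1 1, A.det, A 0 1 + A 1 0)}

/-- The normed hexablock ℍ_N = {(a₂₁, a₁₁, a₂₂, det A) : A ∈ M₂(ℂ), ‖A‖ < 1}. -/
noncomputable def HN : Set (ℂ × ℂ × ℂ × ℂ) :=
  {w | ∃ A : Matrix (Fin 2) (Fin 2) ℂ, opNorm A < 1 ∧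
    w = (A 1 0, A 0 0, A 1 1, A.det)}

section Aux

open Matrix
open scoped Matrix.Norms.L2Operator

lemma opNorm_eq (A : Matrix (Fin 2) (Fin 2) ℂ) : opNorm A = ‖A‖ := rfl

lemma continuous_opNorm : Continuous opNorm := by
  have h := LinearMap.continuous_of_finiteDimensional
    ((LinearMap.toContinuousLinearMap :
        (EuclideanSpace ℂ (Fin 2) →ₗ[ℂ] EuclideanSpace ℂ (Fin 2)) ≃ₗ[ℂ]
        (EuclideanSpace ℂ (Fin 2) →L[ℂ] EuclideanSpace ℂ (Fin 2))).toLinearMap.comp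
      (Matrix.toEuclideanLin (𝕜 := ℂ) (m := Fin 2) (n := Fin 2)).toLinearMap)
  exact continuous_norm.comp h

lemma norm_symm_star (v : Fin 2 → ℂ) :
    ‖(WithLp.equiv 2 (Fin 2 → ℂ)).symm (star v)‖ = ‖(WithLp.equiv 2 (Fin 2 → ℂ)).symm v‖ := by
  simp [EuclideanSpace.norm_eq]

lemma mulVec_map_star (A : Matrix (Fin 2) (Fin 2) ℂ) (v : Fin 2 → ℂ) :
    (A.map (starRingEnd ℂ)) *ᵥ v = star (A *ᵥ star v) := by
  funext i
  fin_cases i <;>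
  simp [Matrix.mulVec, dotProduct, Matrix.map_apply, Fin.sum_univ_two, mul_comm]

lemma norm_map_star_le (A : Matrix (Fin 2) (Fin 2) ℂ) :
    ‖A.map (starRingEnd ℂ)‖ ≤ ‖A‖ := by
  rw [Matrix.l2_opNorm_def]
  refine ContinuousLinearMap.opNorm_le_bound _ (norm_nonneg _) fun x => ?_
  calc ‖(Matrix.toEuclideanLin (A.map (starRingEnd ℂ))).toContinuousLinearMap x‖
      = ‖(WithLp.equiv 2 (Fin 2 → ℂ)).symm ((A.map (starRingEnd ℂ)) *ᵥ ((WithLp.equiv 2 (Fin 2 → ℂ)) x))‖ := rfl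
    _ = ‖(WithLp.equiv 2 (Fin 2 → ℂ)).symm (star (A *ᵥ star ((WithLp.equiv 2 (Fin 2 → ℂ)) x)))‖ := by
        rw [mulVec_map_star]
    _ = ‖(WithLp.equiv 2 (Fin 2 → ℂ)).symm (A *ᵥ star ((WithLp.equiv 2 (Fin 2 → ℂ)) x))‖ :=
        norm_symm_star _
    _ ≤ ‖A‖ * ‖(WithLp.equiv 2 (Fin 2 → ℂ)).symm (star ((WithLp.equiv 2 (Fin 2 → ℂ)) x))‖ :=
        Matrix.l2_opNorm_mulVec A _
    _ = ‖A‖ * ‖x‖ := by rw [norm_symm_star]; simp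

lemma l2norm_transpose (A : Matrix (Fin 2) (Fin 2) ℂ) : ‖Aᵀ‖ = ‖A‖ := by
  have h1 : ∀ B : Matrix (Fin 2) (Fin 2) ℂ, ‖B.map (starRingEnd ℂ)‖ = ‖B‖ := by
    intro B
    refine le_antisymm (norm_map_star_le B) ?_
    have hBB : B = (B.map (starRingEnd ℂ)).map (starRingEnd ℂ) := by
      ext i j; simp
    conv_lhs => rw [hBB]
    exact norm_map_star_le _
  have h2 : Aᵀ = (A.map (starRingEnd ℂ))ᴴ := by
    ext i j; simp [Matrix.conjTranspose_apply]
  rw [h2, Matrix.l2_opNorm_conjTranspose, h1]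

lemma norm_diag_le (A : Matrix (Fin 2) (Fin 2) ℂ) :
    ‖!![A 0 0, 0; 0, A 1 1]‖ ≤ ‖A‖ := by
  set U : Matrix (Fin 2) (Fin 2) ℂ := !![1, 0; 0, -1] with hUdef
  have hU : U ∈ unitary (Matrix (Fin 2) (Fin 2) ℂ) := by
    constructor <;>
      · ext i j
        fin_cases i <;> fin_cases j <;>
          simp [hUdef, Matrix.mul_apply, Fin.sum_univ_two, Matrix.one_apply,
            Matrix.conjTranspose_apply]
  have hD : !![A 0 0, 0; 0, A 1 1] = (2⁻¹ : ℂ) • (A + U * A * U) := by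
    ext i j
    fin_cases i <;> fin_cases j <;>
      simp [hUdef, Matrix.mul_apply, Matrix.vecMul, dotProduct,
        Fin.sum_univ_two] <;> ring
  rw [hD]
  have h1 : ‖U * A * U‖ = ‖A‖ := by
    rw [CStarRing.norm_mul_mem_unitary _ hU, CStarRing.norm_mem_unitary_mul _ hU]
  have h2 : ‖(2⁻¹ : ℂ)‖ = 2⁻¹ := by simp
  calc ‖(2⁻¹ : ℂ) • (A + U * A * U)‖ = 2⁻¹ * ‖A + U * A * U‖ := by rw [norm_smul, h2]
    _ ≤ 2⁻¹ * (‖A‖ + ‖U * A * U‖) := by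
        gcongr; exact norm_add_le _ _
    _ = ‖A‖ := by rw [h1]; ring

/-- The canonical matrix attached to a point `w` with `w.1 ≠ 0`. -/
noncomputable def matW (w : ℂ × ℂ × ℂ × ℂ) : Matrix (Fin 2) (Fin 2) ℂ :=
  !![w.2.1, (w.2.1 * w.2.2.1 - w.2.2.2) / w.1; w.1, w.2.2.1]

lemma matW_det {w : ℂ × ℂ × ℂ × ℂ} (hw : w.1 ≠ 0) : (matW w).det = w.2.2.2 := by
  rw [matW, Matrix.det_fin_two_of]
  field_simp
  ring

lemma mem_HN_iff {w : ℂ × ℂ × ℂ × ℂ} (hw : w.1 ≠ 0) : w ∈ HN ↔ opNorm (matW w) < 1 := by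
  constructor
  · rintro ⟨A, hA, h⟩
    obtain ⟨h1, h2, h3, h4⟩ :
        w.1 = A 1 0 ∧ w.2.1 = A 0 0 ∧ w.2.2.1 = A 1 1 ∧ w.2.2.2 = A.det := by
      simpa [Prod.ext_iff] using h
    have hw' : A 1 0 ≠ 0 := h1 ▸ hw
    have hA01 : A 0 1 = (w.2.1 * w.2.2.1 - w.2.2.2) / w.1 := by
      rw [h2, h3, h4, Matrix.det_fin_two, h1]
      field_simp
      ring
    have hMA : matW w = A := by
      rw [matW, ← hA01, h1, h2, h3, ← Matrix.eta_fin_two A]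
    rwa [hMA]
  · intro h
    refine ⟨matW w, h, ?_⟩
    rw [matW_det hw]
    simp [matW]

lemma mem_domF_iff {w : ℂ × ℂ × ℂ × ℂ} (hw : w.1 ≠ 0) :
    (w.2.1, w.2.2.1, w.2.2.2, w.1 + (w.2.1 * w.2.2.1 - w.2.2.2) / w.1) ∈ domF ↔
      opNorm (matW w) < 1 := by
  set b : ℂ := (w.2.1 * w.2.2.1 - w.2.2.2) / w.1 with hb
  have hwb : w.1 * b = w.2.1 * w.2.2.1 - w.2.2.2 := by
    rw [hb]; field_simp
  constructor
  · rintro ⟨B, hB, h⟩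
    obtain ⟨h1, h2, h3, h4⟩ :
        w.2.1 = B 0 0 ∧ w.2.2.1 = B 1 1 ∧ w.2.2.2 = B.det ∧
          w.1 + b = B 0 1 + B 1 0 := by
      simpa [Prod.ext_iff] using h
    have hprod : B 0 1 * B 1 0 = w.2.1 * w.2.2.1 - w.2.2.2 := by
      rw [h1, h2, h3, Matrix.det_fin_two]; ring
    have hquad : (B 1 0 - w.1) * (B 1 0 - b) = 0 := by
      linear_combination (-(B 1 0)) * h4 + hwb - hprod
    rcases mul_eq_zero.1 hquad with h5 | h5
    · have hB10 : B 1 0 = w.1 := sub_eq_zero.1 h5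
      have hB01 : B 0 1 = b := by linear_combination -h4 - hB10
      have hMB : matW w = B := by
        rw [matW, ← hb, ← hB01, ← hB10, h1, h2, ← Matrix.eta_fin_two B]
      rwa [hMB]
    · have hB10 : B 1 0 = b := sub_eq_zero.1 h5
      have hB01 : B 0 1 = w.1 := by linear_combination -h4 - hB10
      have hMB : matW w = Bᵀ := by
        rw [matW, ← hb]
        ext i j
        fin_cases i <;> fin_cases j <;>
          simp [Matrix.transpose_apply, ← h1, ← h2, hB10, hB01]
      rw [hMB, opNorm_eq, l2norm_transpose, ← opNorm_eq]
      exact hB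
  · intro h
    refine ⟨matW w, h, ?_⟩
    rw [matW_det hw]
    simp only [matW, Matrix.cons_val', Matrix.cons_val_zero, Matrix.cons_val_one,
      Matrix.head_cons, Matrix.head_fin_const, Matrix.empty_val', Matrix.cons_val_fin_one,
      Matrix.of_apply]
    rw [Prod.ext_iff, Prod.ext_iff, Prod.ext_iff]
    refine ⟨rfl, rfl, rfl, ?_⟩
    simp [add_comm]
    exact hb

lemma isOpen_S : IsOpen {w : ℂ × ℂ × ℂ × ℂ | w.1 ≠ 0 ∧ opNorm (matW w) < 1} := by
  have h1 : IsOpen {w : ℂ × ℂ × ℂ × ℂ | w.1 ≠ 0} :=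
    isOpen_compl_singleton.preimage continuous_fst
  have h2 : IsOpen {A : Matrix (Fin 2) (Fin 2) ℂ | opNorm A < 1} :=
    isOpen_lt continuous_opNorm continuous_const
  have hc : ContinuousOn matW {w : ℂ × ℂ × ℂ × ℂ | w.1 ≠ 0} := by
    apply continuousOn_pi.2; intro i
    apply continuousOn_pi.2; intro j
    fin_cases i <;> fin_cases j
    · simpa [matW, Function.comp_def] using ((continuous_fst.comp continuous_snd).continuousOn :
        ContinuousOn (fun w : ℂ × ℂ × ℂ × ℂ => w.2.1) _)
    · have : ContinuousOn (fun w : ℂ × ℂ × ℂ × ℂ =>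
          (w.2.1 * w.2.2.1 - w.2.2.2) / w.1) {w : ℂ × ℂ × ℂ × ℂ | w.1 ≠ 0} := by
        apply ContinuousOn.div
        · fun_prop
        · fun_prop
        · intro w hw; exact hw
      simpa [matW] using this
    · simpa [matW] using (continuous_fst.continuousOn :
        ContinuousOn (fun w : ℂ × ℂ × ℂ × ℂ => w.1) _)
    · simpa [matW, Function.comp_def] using ((continuous_fst.comp (continuous_snd.comp continuous_snd)).continuousOn :
        ContinuousOn (fun w : ℂ × ℂ × ℂ × ℂ => w.2.2.1) _)
  have : {w : ℂ × ℂ × ℂ × ℂ | w.1 ≠ 0 ∧ opNorm (matW w) < 1} =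
      {w : ℂ × ℂ × ℂ × ℂ | w.1 ≠ 0} ∩ matW ⁻¹' {A | opNorm A < 1} := rfl
  rw [this]
  exact hc.isOpen_inter_preimage h1 h2

lemma interior_ne_zero {w : ℂ × ℂ × ℂ × ℂ} (hw : w ∈ interior HN) : w.1 ≠ 0 := by
  intro h0
  obtain ⟨A, hA, hAe⟩ : w ∈ HN := interior_subset hw
  obtain ⟨e1, e2, e3, e4⟩ :
      w.1 = A 1 0 ∧ w.2.1 = A 0 0 ∧ w.2.2.1 = A 1 1 ∧ w.2.2.2 = A.det := by
    simpa [Prod.ext_iff] using hAe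
  have hx3 : w.2.2.2 = w.2.1 * w.2.2.1 := by
    rw [e2, e3, e4, Matrix.det_fin_two, ← e1, h0]
    ring
  obtain ⟨ε, hε, hball⟩ := Metric.mem_nhds_iff.1 (mem_interior_iff_mem_nhds.1 hw)
  set δ : ℂ := ((ε / 2 : ℝ) : ℂ) with hδ
  have hmem : (w.1, w.2.1, w.2.2.1, w.2.2.2 + δ) ∈ HN := by
    apply hball
    simp only [Metric.mem_ball, Prod.dist_eq, dist_self, Complex.dist_eq, add_sub_cancel_left]
    have : ‖δ‖ = ε / 2 := by
      rw [hδ]; rw [Complex.norm_real, Real.norm_eq_abs, abs_of_pos (by linarith)]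
    rw [hδ] at *
    simp only [add_sub_cancel_left] at *
    rw [max_lt_iff, max_lt_iff, max_lt_iff]
    refine ⟨hε, hε, hε, ?_⟩
    rw [this]; linarith
  obtain ⟨B, hB, hBe⟩ := hmem
  obtain ⟨f1, f2, f3, f4⟩ :
      w.1 = B 1 0 ∧ w.2.1 = B 0 0 ∧ w.2.2.1 = B 1 1 ∧ w.2.2.2 + δ = B.det := by
    simpa [Prod.ext_iff] using hBe
  have : w.2.2.2 + δ = w.2.1 * w.2.2.1 := by
    rw [f2, f3, f4, Matrix.det_fin_two, ← f1, h0]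
    ring
  have hδ0 : δ = 0 := by
    rw [hx3] at this; linear_combination this
  rw [hδ] at hδ0
  have : (ε / 2 : ℝ) = 0 := by exact_mod_cast hδ0
  linarith

end Aux

/-- Corollary 2.13: int(ℍ_N) = {(a, x₁, x₂, x₃) : a ≠ 0, (x₁, x₂, x₃, a + (x₁x₂−x₃)/a) ∈ 𝔽},
and ℍ_N = int(ℍ_N) ∪ {(0, x₁, x₂, x₁x₂) : (x₁, x₂, x₁x₂, 0) ∈ 𝔽}. -/
theorem stmt13 :
    interior HN = {w : ℂ × ℂ × ℂ × ℂ | w.1 ≠ 0 ∧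
      (w.2.1, w.2.2.1, w.2.2.2, w.1 + (w.2.1 * w.2.2.1 - w.2.2.2) / w.1) ∈ domF} ∧
    HN = interior HN ∪
      {w : ℂ × ℂ × ℂ × ℂ | ∃ x1 x2 : ℂ, w = ((0 : ℂ), x1, x2, x1 * x2) ∧
        (x1, x2, x1 * x2, (0 : ℂ)) ∈ domF} := by
  have hSsub : {w : ℂ × ℂ × ℂ × ℂ | w.1 ≠ 0 ∧ opNorm (matW w) < 1} ⊆ HN :=
    fun w hw => (mem_HN_iff hw.1).2 hw.2
  have hint : interior HN = {w : ℂ × ℂ × ℂ × ℂ | w.1 ≠ 0 ∧ opNorm (matW w) < 1} := by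
    apply subset_antisymm
    · intro w hw
      have h1 : w.1 ≠ 0 := interior_ne_zero hw
      exact ⟨h1, (mem_HN_iff h1).1 (interior_subset hw)⟩
    · exact interior_maximal hSsub isOpen_S
  constructor
  · rw [hint]
    ext w
    exact (and_congr_right fun h => (mem_domF_iff h).symm)
  · ext w
    constructor
    · intro hw
      by_cases h0 : w.1 = 0
      · right
        obtain ⟨A, hA, hAe⟩ := hw
        obtain ⟨e1, e2, e3, e4⟩ :
            w.1 = A 1 0 ∧ w.2.1 = A 0 0 ∧ w.2.2.1 = A 1 1 ∧ w.2.2.2 = A.det := by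
          simpa [Prod.ext_iff] using hAe
        refine ⟨A 0 0, A 1 1, ?_, ?_⟩
        · have hdet : A.det = A 0 0 * A 1 1 := by
            rw [Matrix.det_fin_two, ← e1, h0]; ring
          rw [hAe, ← e1, h0, hdet]
        · refine ⟨!![A 0 0, 0; 0, A 1 1], ?_, ?_⟩
          · have hle : opNorm !![A 0 0, 0; 0, A 1 1] ≤ opNorm A := by
              rw [opNorm_eq, opNorm_eq]; exact norm_diag_le A
            exact lt_of_le_of_lt hle hA
          · simp [Matrix.det_fin_two_of]
      · left
        rw [hint]
        exact ⟨h0, (mem_HN_iff h0).1 hw⟩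
    · intro hw
      rcases hw with hw | hw
      · exact interior_subset hw
      · obtain ⟨x1, x2, hwe, B, hB, hBe⟩ := hw
        obtain ⟨f1, f2, f3, f4⟩ :
            x1 = B 0 0 ∧ x2 = B 1 1 ∧ x1 * x2 = B.det ∧ (0 : ℂ) = B 0 1 + B 1 0 := by
          simpa [Prod.ext_iff] using hBe
        have hdet2 : B.det = B 0 0 * B 1 1 - B 0 1 * B 1 0 := Matrix.det_fin_two B
        have hP : B 0 1 * B 1 0 = 0 := by
          linear_combination f3 + hdet2 - x2 * f1 - (B 0 0) * f2
        have hB10 : B 1 0 = 0 := by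
          have h2 : B 1 0 * B 1 0 = 0 := by linear_combination (-(B 1 0)) * f4 - hP
          exact mul_self_eq_zero.1 h2
        refine ⟨B, hB, ?_⟩
        rw [hwe, f3, f1, f2, ← hB10]
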